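/- Let R be a commutative ring, σ a finite index type, and n : σ →₀ ℕ. Then the divided-power operator D_n on MvPolynomial σ R is a differential operator of order ≤ |n| in Grothendieck's sense, where |n| = Σ i, n i: every (|n|+1)-fold iterated commutator [[…[D_n, t_{f₀}], t_{f₁}], …, t_{f_{|n|}}] with multiplication operators t_f vanishes. -/

import Mathlib

open LinearMap MvPolynomial


/-- The divided-power operator `D_n` on `MvPolynomial σ R`, determined on monomials by
`D_n (X ^ m) = (∏ i, Nat.choose (m i) (n i)) • X ^ (m - n)` (componentwise truncated
subtraction). -/
noncomputable def dpOp (R : Type*) [CommRing R] (σ : Type*) [Fintype σ] (n : σ →₀ ℕ) :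
    MvPolynomial σ R →ₗ[R] MvPolynomial σ R :=
  (Finsupp.lsum ℕ fun m : σ →₀ ℕ =>
    (∏ i, Nat.choose (m i) (n i)) • (MvPolynomial.monomial (m - n) : R →ₗ[R] MvPolynomial σ R))
    ∘ₗ (AddMonoidAlgebra.coeffLinearEquiv R).toLinearMap

/-- `D` is a differential operator of order `≤ m` in Grothendieck's sense: every
`(m+1)`-fold iterated commutator of `D` with multiplication operators vanishes. -/
def IsDiffOpLE (R : Type*) {A : Type*} [CommRing R] [CommRing A] [Algebra R A]
    (m : ℕ) (D : A →ₗ[R] A) : Prop :=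
  ∀ a : Fin (m + 1) → A,
    Fin.foldl (m + 1)
      (fun E i => E ∘ₗ LinearMap.mulLeft R (a i) - LinearMap.mulLeft R (a i) ∘ₗ E) D = 0

section General

variable {R A : Type*} [CommRing R] [CommRing A] [Algebra R A]

/-- The commutator `[D, t_a]`. -/
noncomputable def stp (a : A) (E : A →ₗ[R] A) : A →ₗ[R] A :=
  E ∘ₗ mulLeft R a - mulLeft R a ∘ₗ E

lemma stp_zero (a : A) : stp a (0 : A →ₗ[R] A) = 0 := by
  simp [stp]

lemma stp_add (a : A) (D E : A →ₗ[R] A) : stp a (D + E) = stp a D + stp a E := by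
  simp only [stp, add_comp, comp_add]; abel

lemma mulLeft_commute (a c : A) :
    mulLeft R a ∘ₗ mulLeft R c = mulLeft R c ∘ₗ mulLeft R a := by
  rw [← mulLeft_mul, ← mulLeft_mul, mul_comm]

lemma stp_mulLeft_comp (a c : A) (E : A →ₗ[R] A) :
    stp a (mulLeft R c ∘ₗ E) = mulLeft R c ∘ₗ stp a E := by
  simp only [stp, comp_sub, comp_assoc]
  congr 1
  rw [← comp_assoc, ← comp_assoc, mulLeft_commute]

lemma stp_comp_mulLeft (a c : A) (E : A →ₗ[R] A) :
    stp a (E ∘ₗ mulLeft R c) = stp a E ∘ₗ mulLeft R c := by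
  simp only [stp, sub_comp, comp_assoc]
  rw [mulLeft_commute c a]

lemma stp_add_left (f g : A) (D : A →ₗ[R] A) : stp (f + g) D = stp f D + stp g D := by
  have h : mulLeft R (f + g) = mulLeft R f + mulLeft R g := by
    ext x; simp [add_mul]
  simp only [stp, h, comp_add, add_comp]; abel

lemma stp_mul_left (f g : A) (D : A →ₗ[R] A) :
    stp (f * g) D = stp f D ∘ₗ mulLeft R g + mulLeft R f ∘ₗ stp g D := by
  ext x
  simp [stp, mul_assoc, mul_sub, sub_add_sub_comm]

lemma stp_algebraMap (r : R) (D : A →ₗ[R] A) : stp (algebraMap R A r) D = 0 := by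
  ext x
  simp only [stp, LinearMap.sub_apply, comp_apply, mulLeft_apply, LinearMap.zero_apply]
  rw [← Algebra.smul_def, ← Algebra.smul_def, map_smul, sub_self]

lemma foldl_stp_zero (k : ℕ) (a : Fin k → A) :
    Fin.foldl k (fun E i => stp (a i) E) (0 : A →ₗ[R] A) = 0 := by
  induction k with
  | zero => simp
  | succ k ih =>
    rw [Fin.foldl_succ, stp_zero]
    exact ih fun i => a i.succ

lemma foldl_stp_add (k : ℕ) (a : Fin k → A) (D E : A →ₗ[R] A) :
    Fin.foldl k (fun E i => stp (a i) E) (D + E) =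
      Fin.foldl k (fun E i => stp (a i) E) D + Fin.foldl k (fun E i => stp (a i) E) E := by
  induction k generalizing D E with
  | zero => simp
  | succ k ih =>
    rw [Fin.foldl_succ, Fin.foldl_succ, Fin.foldl_succ, stp_add]
    exact ih (fun i => a i.succ) _ _

lemma foldl_stp_mulLeft (k : ℕ) (a : Fin k → A) (c : A) (D : A →ₗ[R] A) :
    Fin.foldl k (fun E i => stp (a i) E) (mulLeft R c ∘ₗ D) =
      mulLeft R c ∘ₗ Fin.foldl k (fun E i => stp (a i) E) D := by
  induction k generalizing D with
  | zero => simp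
  | succ k ih =>
    rw [Fin.foldl_succ, Fin.foldl_succ, stp_mulLeft_comp]
    exact ih (fun i => a i.succ) _

lemma foldl_stp_comp_mulLeft (k : ℕ) (a : Fin k → A) (c : A) (D : A →ₗ[R] A) :
    Fin.foldl k (fun E i => stp (a i) E) (D ∘ₗ mulLeft R c) =
      Fin.foldl k (fun E i => stp (a i) E) D ∘ₗ mulLeft R c := by
  induction k generalizing D with
  | zero => simp
  | succ k ih =>
    rw [Fin.foldl_succ, Fin.foldl_succ, stp_comp_mulLeft]
    exact ih (fun i => a i.succ) _

lemma isDiffOpLE_zero_op (m : ℕ) : IsDiffOpLE R m (0 : A →ₗ[R] A) := by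
  intro a
  exact foldl_stp_zero _ a

lemma IsDiffOpLE.add {m : ℕ} {D E : A →ₗ[R] A} (hD : IsDiffOpLE R m D)
    (hE : IsDiffOpLE R m E) : IsDiffOpLE R m (D + E) := by
  intro a
  show Fin.foldl (m + 1) (fun E i => stp (a i) E) (D + E) = 0
  have hD' : Fin.foldl (m + 1) (fun E i => stp (a i) E) D = 0 := hD a
  have hE' : Fin.foldl (m + 1) (fun E i => stp (a i) E) E = 0 := hE a
  rw [foldl_stp_add, hD', hE', add_zero]

lemma IsDiffOpLE.mulLeft_comp {m : ℕ} {D : A →ₗ[R] A} (hD : IsDiffOpLE R m D) (c : A) :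
    IsDiffOpLE R m (mulLeft R c ∘ₗ D) := by
  intro a
  show Fin.foldl (m + 1) (fun E i => stp (a i) E) (mulLeft R c ∘ₗ D) = 0
  have hD' : Fin.foldl (m + 1) (fun E i => stp (a i) E) D = 0 := hD a
  rw [foldl_stp_mulLeft, hD', comp_zero]

lemma IsDiffOpLE.comp_mulLeft {m : ℕ} {D : A →ₗ[R] A} (hD : IsDiffOpLE R m D) (c : A) :
    IsDiffOpLE R m (D ∘ₗ mulLeft R c) := by
  intro a
  show Fin.foldl (m + 1) (fun E i => stp (a i) E) (D ∘ₗ mulLeft R c) = 0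
  have hD' : Fin.foldl (m + 1) (fun E i => stp (a i) E) D = 0 := hD a
  rw [foldl_stp_comp_mulLeft, hD', zero_comp]

lemma isDiffOpLE_succ_of {m : ℕ} {D : A →ₗ[R] A}
    (h : ∀ f : A, IsDiffOpLE R m (stp f D)) : IsDiffOpLE R (m + 1) D := by
  intro a
  rw [Fin.foldl_succ]
  exact h (a 0) fun i => a i.succ

end General

section Poly

variable {R : Type*} [CommRing R] {σ : Type*} [Fintype σ]

lemma dpOp_monomial (n m : σ →₀ ℕ) (r : R) :
    dpOp R σ n (monomial m r) = (∏ i, (m i).choose (n i)) • monomial (m - n) r := by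
  show Finsupp.sum (AddMonoidAlgebra.coeff (monomial m r)) (fun m r =>
    ((∏ i, (m i).choose (n i)) • (monomial (m - n) : R →ₗ[R] MvPolynomial σ R)) r) = _
  rw [sum_monomial_eq (by simp)]
  simp

lemma dpOp_zero : dpOp R σ 0 = LinearMap.id := by
  refine MvPolynomial.linearMap_ext fun m => LinearMap.ext fun r => ?_
  show dpOp R σ 0 (monomial m r) = LinearMap.id (R := R) (monomial m r)
  rw [dpOp_monomial]
  simp

lemma stp_X (n : σ →₀ ℕ) (j : σ) :
    stp (X j : MvPolynomial σ R) (dpOp R σ n) =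
      if n j = 0 then 0 else dpOp R σ (n - Finsupp.single j 1) := by
  classical
  refine MvPolynomial.linearMap_ext fun m => LinearMap.ext fun r => ?_
  show stp (X j : MvPolynomial σ R) (dpOp R σ n) (monomial m r)
      = (if n j = 0 then 0 else dpOp R σ (n - Finsupp.single j 1)) (monomial m r)
  set e : σ →₀ ℕ := Finsupp.single j 1 with he
  have hXmul : ∀ (k : σ →₀ ℕ) (s : R),
      (X j : MvPolynomial σ R) * monomial k s = monomial (e + k) s := by
    intro k s
    rw [X, monomial_mul, one_mul]
  have hej : e j = 1 := by simp [he]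
  have hei : ∀ i, i ≠ j → e i = 0 := by
    intro i hi; simp [he, Finsupp.single_apply, Ne.symm hi]
  simp only [stp, LinearMap.sub_apply, comp_apply, mulLeft_apply]
  rw [hXmul, dpOp_monomial, dpOp_monomial, mul_smul_comm, hXmul]
  by_cases h : n j = 0
  · rw [if_pos h]
    rw [LinearMap.zero_apply, sub_eq_zero]
    have h1 : (∏ i, ((e + m) i).choose (n i)) = ∏ i, (m i).choose (n i) := by
      apply Finset.prod_congr rfl
      intro i _
      by_cases hij : i = j
      · subst hij; simp [h]
      · rw [Finsupp.add_apply, hei i hij, zero_add]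
    have h2 : (e + m) - n = e + (m - n) := by
      ext i
      simp only [Finsupp.tsub_apply, Finsupp.add_apply]
      by_cases hij : i = j
      · subst hij; rw [h]; omega
      · rw [hei i hij]; omega
    rw [h1, h2]
  · rw [if_neg h]
    rw [dpOp_monomial]
    obtain ⟨k, hk⟩ := Nat.exists_eq_succ_of_ne_zero h
    have hprod : (∏ i, ((e + m) i).choose (n i))
        = (∏ i, (m i).choose (n i)) + ∏ i, (m i).choose ((n - e) i) := by
      rw [← Finset.mul_prod_erase Finset.univ _ (Finset.mem_univ j),
          ← Finset.mul_prod_erase Finset.univ (fun i => (m i).choose (n i))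
            (Finset.mem_univ j),
          ← Finset.mul_prod_erase Finset.univ (fun i => (m i).choose ((n - e) i))
            (Finset.mem_univ j)]
      have hP : ∏ i ∈ Finset.univ.erase j, ((e + m) i).choose (n i)
          = ∏ i ∈ Finset.univ.erase j, (m i).choose (n i) := by
        apply Finset.prod_congr rfl
        intro i hi
        rw [Finsupp.add_apply, hei i (Finset.ne_of_mem_erase hi), zero_add]
      have hQ : ∏ i ∈ Finset.univ.erase j, (m i).choose ((n - e) i)
          = ∏ i ∈ Finset.univ.erase j, (m i).choose (n i) := by
        apply Finset.prod_congr rfl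
        intro i hi
        rw [Finsupp.tsub_apply, hei i (Finset.ne_of_mem_erase hi), Nat.sub_zero]
      rw [hP, hQ, ← add_mul]
      congr 1
      rw [Finsupp.add_apply, hej, Finsupp.tsub_apply, hej, hk]
      rw [add_comm 1 (m j), Nat.choose_succ_succ, Nat.succ_sub_one, add_comm]
    have hexp : (e + m) - n = m - (n - e) := by
      ext i
      simp only [Finsupp.tsub_apply, Finsupp.add_apply]
      by_cases hij : i = j
      · subst hij; rw [hej, hk]; omega
      · rw [hei i hij]; omega
    rw [hprod, add_smul, hexp]
    have h3 : (∏ i, (m i).choose (n i)) • (monomial (m - (n - e)) r : MvPolynomial σ R)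
        = (∏ i, (m i).choose (n i)) • monomial (e + (m - n)) r := by
      rcases le_or_gt (n j) (m j) with hle | hlt
      · have huv : m - (n - e) = e + (m - n) := by
          ext i
          simp only [Finsupp.tsub_apply, Finsupp.add_apply]
          by_cases hij : i = j
          · subst hij; rw [hej]; omega
          · rw [hei i hij]; omega
        rw [huv]
      · have hz : (fun i => (m i).choose (n i)) j = 0 :=
          Nat.choose_eq_zero_of_lt hlt
        rw [Finset.prod_eq_zero (Finset.mem_univ j) hz, zero_smul, zero_smul]
    rw [h3]
    abel

end Poly


/-- The divided-power operator `D_n` is a differential operator of order `≤ |n| = ∑ i, n i`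
in Grothendieck's sense. -/
theorem dpOp_isDiffOpLE (R : Type*) [CommRing R] (σ : Type*) [Fintype σ] (n : σ →₀ ℕ) :
    IsDiffOpLE R (∑ i, n i) (dpOp R σ n) := by
  classical
  suffices H : ∀ s : ℕ, ∀ n : σ →₀ ℕ, ∑ i, n i = s → IsDiffOpLE R s (dpOp R σ n) from
    H _ n rfl
  intro s
  induction s using Nat.strong_induction_on with
  | _ s IH =>
    cases s with
    | zero =>
      intro n hn
      have hn0 : n = 0 := by
        ext i
        exact Finset.sum_eq_zero_iff.mp hn i (Finset.mem_univ i)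
      subst hn0
      rw [dpOp_zero]
      intro a
      simp [Fin.foldl_succ]
    | succ s =>
      intro n hn
      apply isDiffOpLE_succ_of
      intro f
      induction f using MvPolynomial.induction_on with
      | C r =>
        rw [← MvPolynomial.algebraMap_eq, stp_algebraMap]
        exact isDiffOpLE_zero_op s
      | add p q hp hq =>
        rw [stp_add_left]
        exact hp.add hq
      | mul_X p j hp =>
        rw [stp_mul_left]
        apply IsDiffOpLE.add
        · exact hp.comp_mulLeft _
        · rw [stp_X]
          by_cases h : n j = 0
          · rw [if_pos h, comp_zero]
            exact isDiffOpLE_zero_op s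
          · rw [if_neg h]
            apply IsDiffOpLE.mulLeft_comp
            apply IH s (Nat.lt_succ_self s)
            set n' : σ →₀ ℕ := n - Finsupp.single j 1 with hn'
            have : (∑ i, n' i) + 1 = ∑ i, n i := by
              rw [← Finset.add_sum_erase Finset.univ _ (Finset.mem_univ j),
                  ← Finset.add_sum_erase Finset.univ (fun i => n i) (Finset.mem_univ j)]
              have hQ : ∑ i ∈ Finset.univ.erase j, n' i
                  = ∑ i ∈ Finset.univ.erase j, n i := by
                apply Finset.sum_congr rfl
                intro i hi
                rw [hn', Finsupp.tsub_apply, Finsupp.single_apply,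
                  if_neg (Ne.symm (Finset.ne_of_mem_erase hi)), Nat.sub_zero]
              rw [hn', Finsupp.tsub_apply, Finsupp.single_apply, if_pos rfl, hQ]
              omega
            omega
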